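/- arXiv:2511.16469 — 2 statements merged into one kernel-verified Lean document; each statement's English description precedes it below -/
import Mathlib

section
/- Let L ≥ 0, γ > 0, λ ∈ (0,1), and suppose τ < T where T is the time at which the solution φ₀ of φ' = −2Lφ − γ(φ²+1), φ(0) = 1/λ, satisfies φ₀(T) = λ. Then there exist λ* ∈ (λ, 1) and η > 0 such that the solution φ of the perturbed ODE φ' = −2Lφ − γ((1+η)φ² + 1) with φ(0) = 1/λ* satisfies φ(τ) = λ* and φ(s) ∈ [λ*, 1/λ*] for all s ∈ [0, τ]. -/
open Set Real MeasureTheory intervalIntegral Topology Filter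

lemma riccati_quad_pos {L γ η : ℝ} (hγ : 0 < γ) (hL : 0 ≤ L) (hη : 0 ≤ η) {x : ℝ}
    (hx : 0 < x) : 0 < γ * (1 + η) * x ^ 2 + 2 * L * x + γ := by
  have h1 : 0 ≤ γ * (1 + η) * x ^ 2 := by positivity
  have h2 : 0 ≤ 2 * L * x := by positivity
  linarith

lemma hasDerivAt_primitive (L γ η c : ℝ) (hγ : 0 < γ) (hL : 0 ≤ L) (hη : 0 ≤ η)
    (hc : 0 < c) {x : ℝ} (hx : 0 < x) :
    HasDerivAt (fun u => ∫ t in c..u, (γ * (1 + η) * t ^ 2 + 2 * L * t + γ)⁻¹)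
      (γ * (1 + η) * x ^ 2 + 2 * L * x + γ)⁻¹ x := by
  set q : ℝ → ℝ := fun t => γ * (1 + η) * t ^ 2 + 2 * L * t + γ with hq
  have hqc : Continuous q := by fun_prop
  have hqpos : ∀ t : ℝ, 0 < t → 0 < q t := fun t ht => riccati_quad_pos hγ hL hη ht
  have hcontOn : ContinuousOn (fun t => (q t)⁻¹) (Ioi 0) :=
    ContinuousOn.inv₀ hqc.continuousOn fun t ht => (hqpos t ht).ne'
  have hint : IntervalIntegrable (fun t => (q t)⁻¹) volume c x := by
    apply ContinuousOn.intervalIntegrable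
    apply hcontOn.mono
    intro t ht
    rcases le_total c x with h | h
    · rw [uIcc_of_le h] at ht; exact lt_of_lt_of_le hc ht.1
    · rw [uIcc_of_ge h] at ht; exact lt_of_lt_of_le hx ht.1
  exact integral_hasDerivAt_right hint
    (hcontOn.stronglyMeasurableAtFilter isOpen_Ioi x hx)
    (hcontOn.continuousAt (isOpen_Ioi.mem_nhds hx))

lemma barrier_aux {u d : ℝ → ℝ} {T c : ℝ}
    (hd : ∀ s ∈ Icc (0:ℝ) T, HasDerivAt u (d s) s)
    (hneg : ∀ s ∈ Icc (0:ℝ) T, u s = c → d s < 0)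
    (h0 : c < u 0) (hT2 : c ≤ u T) :
    ∀ s ∈ Icc (0:ℝ) T, c ≤ u s := by
  by_contra hcon
  push_neg at hcon
  obtain ⟨s₀, hs₀, hus₀⟩ := hcon
  have hTpos : s₀ ≤ T := hs₀.2
  set A : Set ℝ := Icc s₀ T ∩ u ⁻¹' Ici c with hA
  have hsub : Icc s₀ T ⊆ Icc 0 T := Icc_subset_Icc hs₀.1 le_rfl
  have hucont : ContinuousOn u (Icc s₀ T) := fun s hs =>
    ((hd s (hsub hs)).continuousAt).continuousWithinAt
  have hAclosed : IsClosed A := hucont.preimage_isClosed_of_isClosed isClosed_Icc isClosed_Ici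
  have hAne : A.Nonempty := ⟨T, ⟨hTpos, le_rfl⟩, hT2⟩
  have hAbdd : BddBelow A := ⟨s₀, fun x hx => hx.1.1⟩
  set s₂ := sInf A with hs₂def
  have hs₂A : s₂ ∈ A := hAclosed.csInf_mem hAne hAbdd
  have hs₂Icc : s₂ ∈ Icc (0:ℝ) T := hsub hs₂A.1
  have hlt : ∀ s, s₀ ≤ s → s < s₂ → u s < c := by
    intro s hs hss
    have : s ∉ A := notMem_of_lt_csInf hss hAbdd
    by_contra h
    push_neg at h
    exact this ⟨⟨hs, le_trans (le_of_lt hss) hs₂A.1.2⟩, h⟩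
  have hs₀s₂ : s₀ < s₂ := by
    rcases lt_or_eq_of_le hs₂A.1.1 with h | h
    · exact h
    · exact absurd (h ▸ hs₂A.2 : c ≤ u s₀) (not_le.mpr hus₀)
  haveI hne : (𝓝[Ico s₀ s₂] s₂).NeBot := by
    rw [← mem_closure_iff_nhdsWithin_neBot, closure_Ico hs₀s₂.ne]
    exact ⟨le_of_lt hs₀s₂, le_rfl⟩
  have hus₂ : u s₂ = c := by
    refine le_antisymm ?_ hs₂A.2
    have htend : Filter.Tendsto u (𝓝[Ico s₀ s₂] s₂) (𝓝 (u s₂)) :=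
      ((hd s₂ hs₂Icc).continuousAt).continuousWithinAt
    refine le_of_tendsto htend ?_
    filter_upwards [self_mem_nhdsWithin] with x hx
    exact le_of_lt (hlt x hx.1 hx.2)
  have hds₂ : d s₂ < 0 := hneg s₂ hs₂Icc hus₂
  have hslope : Filter.Tendsto (slope u s₂) (𝓝[≠] s₂) (𝓝 (d s₂)) :=
    hasDerivAt_iff_tendsto_slope.mp (hd s₂ hs₂Icc)
  have hev : ∀ᶠ x in 𝓝[≠] s₂, slope u s₂ x < 0 := hslope.eventually_lt_const hds₂
  have hsub2 : Ico s₀ s₂ ⊆ {x | x ≠ s₂} := fun x hx => ne_of_lt hx.2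
  have hev' : ∀ᶠ x in 𝓝[Ico s₀ s₂] s₂, slope u s₂ x < 0 :=
    hev.filter_mono (nhdsWithin_mono s₂ hsub2)
  obtain ⟨x, hxs, hxI⟩ := (hev'.and self_mem_nhdsWithin).exists
  rw [slope_def_field, hus₂] at hxs
  have h1 : u x < c := hlt x hxI.1 hxI.2
  have h2 : 0 < (c - u x) / (s₂ - x) := div_pos (by linarith) (by linarith [hxI.2])
  have h3 : (c - u x) / (s₂ - x) = (u x - c) / (x - s₂) := by
    rw [← neg_div_neg_eq]; ring_nf
  rw [h3] at h2
  linarith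


lemma transit_eq {L γ l T : ℝ} (hγ : 0 < γ) (hL : 0 ≤ L) (hl : l ∈ Ioo (0:ℝ) 1)
    (φ₀ : ℝ → ℝ)
    (hode₀ : ∀ s ∈ Icc (0 : ℝ) T, HasDerivAt φ₀ (-2 * L * φ₀ s - γ * ((φ₀ s) ^ 2 + 1)) s)
    (h00 : φ₀ 0 = 1 / l) (hT : 0 < T) (hTl : φ₀ T = l) :
    (∫ x in l..(1/l), (γ * (1 + 0) * x ^ 2 + 2 * L * x + γ)⁻¹) = T := by
  obtain ⟨hl0, hl1⟩ := hl
  have hc : 0 < 1 / l := by positivity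
  have hll : l < 1 / l := by rw [lt_div_iff₀ hl0]; nlinarith
  have hge : ∀ s ∈ Icc (0:ℝ) T, l ≤ φ₀ s := by
    apply barrier_aux hode₀
    · intro s hs he
      rw [he]
      have h1 : 0 ≤ 2 * L * l := by positivity
      have h2 : 0 < γ * (l ^ 2 + 1) := by positivity
      linarith
    · rw [h00]; exact hll
    · rw [hTl]
  set W : ℝ → ℝ := fun x => ∫ t in (1/l)..x, (γ * (1 + 0) * t ^ 2 + 2 * L * t + γ)⁻¹ with hW
  have key : ∀ s ∈ Icc (0:ℝ) T, HasDerivAt (fun s => W (φ₀ s) + s) 0 s := by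
    intro s hs
    have hx : 0 < φ₀ s := lt_of_lt_of_le hl0 (hge s hs)
    have hWd := hasDerivAt_primitive L γ 0 (1/l) hγ hL le_rfl hc hx
    have hchain := HasDerivAt.comp s hWd (hode₀ s hs)
    have hsum := hchain.add (hasDerivAt_id s)
    refine hsum.congr_deriv ?_
    have hq : γ * (1 + 0) * (φ₀ s) ^ 2 + 2 * L * (φ₀ s) + γ ≠ 0 :=
      (riccati_quad_pos hγ hL le_rfl hx).ne'
    rw [show -2 * L * φ₀ s - γ * (φ₀ s ^ 2 + 1) = -(γ * (1 + 0) * φ₀ s ^ 2 + 2 * L * φ₀ s + γ) by ring,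
      mul_neg, inv_mul_cancel₀ hq]
    ring
  have heq := eq_of_has_deriv_right_eq (f' := fun _ => (0:ℝ))
    (f := fun s => W (φ₀ s) + s) (g := fun _ => (0:ℝ)) (a := 0) (b := T)
    (fun x hx => (key x ⟨hx.1, le_of_lt hx.2⟩).hasDerivWithinAt)
    (fun x hx => (hasDerivAt_const x (0:ℝ)).hasDerivWithinAt)
    (fun x hx => ((key x hx).continuousAt).continuousWithinAt)
    continuousOn_const
    (by show W (φ₀ 0) + 0 = 0; rw [h00]; simp [hW, intervalIntegral.integral_same])
  have hfin : W (φ₀ T) + T = 0 := heq T ⟨le_of_lt hT, le_rfl⟩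
  rw [hTl] at hfin
  have hWl : W l = -T := by linarith
  rw [intervalIntegral.integral_symm]
  rw [hW] at hWl
  simp only [hWl, neg_neg]

lemma riccati_solution {L γ m η τ : ℝ} (hγ : 0 < γ) (hL : 0 ≤ L) (hm0 : 0 < m)
    (hm1 : m < 1) (hη : 0 < η) (hτ : 0 < τ)
    (hF : (∫ x in m..(1/m), (γ * (1 + η) * x ^ 2 + 2 * L * x + γ)⁻¹) = τ) :
    ∃ φ : ℝ → ℝ,
      (∀ s ∈ Icc (0 : ℝ) τ,
        HasDerivAt φ (-2 * L * φ s - γ * ((1 + η) * (φ s) ^ 2 + 1)) s) ∧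
      φ 0 = 1 / m ∧ φ τ = m ∧ ∀ s ∈ Icc (0 : ℝ) τ, φ s ∈ Icc m (1 / m) := by
  set c : ℝ := 1 / m with hcdef
  have hc : 0 < c := by positivity
  have hmc : m < c := by rw [hcdef, lt_div_iff₀ hm0]; nlinarith
  set f : ℝ → ℝ := fun t => (γ * (1 + η) * t ^ 2 + 2 * L * t + γ)⁻¹ with hfdef
  set G : ℝ → ℝ := fun x => -∫ t in c..x, f t with hGdef
  have hG : ∀ x ∈ Ioi (0:ℝ), HasDerivAt G (-(f x)) x := fun x hx =>
    (hasDerivAt_primitive L γ η c hγ hL hη.le hc hx).neg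
  have hfpos : ∀ x ∈ Ioi (0:ℝ), 0 < f x := fun x hx =>
    inv_pos.mpr (riccati_quad_pos hγ hL hη.le hx)
  have Gcont : ContinuousOn G (Ioi 0) := fun x hx =>
    ((hG x hx).continuousAt).continuousWithinAt
  have hanti : StrictAntiOn G (Ioi 0) := by
    apply strictAntiOn_of_deriv_neg (convex_Ioi 0) Gcont
    intro x hx
    rw [interior_Ioi] at hx
    rw [(hG x hx).deriv]
    exact neg_lt_zero.mpr (hfpos x hx)
  have hGm : G m = τ := by
    have h1 : (∫ t in c..m, f t) = -∫ t in m..c, f t := intervalIntegral.integral_symm m c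
    show -∫ t in c..m, f t = τ
    rw [h1, neg_neg]
    exact hF
  have hGc : G c = 0 := by
    show -∫ t in c..c, f t = 0
    rw [intervalIntegral.integral_same, neg_zero]
  set a : ℝ := m / 2 with hadef
  set b : ℝ := c + 1 with hbdef
  have ha0 : 0 < a := by positivity
  have ham : a < m := by rw [hadef]; linarith
  have hcb : c < b := by rw [hbdef]; linarith
  have hab : a ≤ b := by linarith
  have hmem : ∀ x : ℝ, 0 < x → x ∈ Ioi (0:ℝ) := fun x hx => hx
  have hGa : τ < G a := by
    have := hanti (hmem a ha0) (hmem m hm0) ham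
    rwa [hGm] at this
  have hGb : G b < 0 := by
    have := hanti (hmem c hc) (hmem b (lt_trans hc hcb)) hcb
    rwa [hGc] at this
  set U : Set ℝ := Ioo (G b) (G a) with hUdef
  have hUopen : IsOpen U := isOpen_Ioo
  have hUsub : Icc (0:ℝ) τ ⊆ U := fun s hs => ⟨lt_of_lt_of_le hGb hs.1, lt_of_le_of_lt hs.2 hGa⟩
  have hIooIoi : Ioo a b ⊆ Ioi (0:ℝ) := fun x hx => lt_trans ha0 hx.1
  have hex : ∀ s ∈ U, ∃ x ∈ Ioi (0:ℝ), G x = s := by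
    intro s hs
    have := intermediate_value_Ioo' hab (Gcont.mono (fun x hx => lt_of_lt_of_le ha0 hx.1)) hs
    obtain ⟨x, hx, hGx⟩ := this
    exact ⟨x, hIooIoi hx, hGx⟩
  set φ : ℝ → ℝ := fun s => Function.invFunOn G (Ioi 0) s with hφdef
  have hGφ : ∀ s ∈ U, G (φ s) = s := fun s hs => Function.invFunOn_eq (hex s hs)
  have hφpos : ∀ s ∈ U, φ s ∈ Ioi (0:ℝ) := fun s hs => Function.invFunOn_mem (hex s hs)
  have hφab : ∀ s ∈ U, φ s ∈ Ioo a b := by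
    intro s hs
    constructor
    · by_contra h
      push_neg at h
      have := hanti.antitoneOn (hφpos s hs) (hmem a ha0) h
      rw [hGφ s hs] at this
      exact absurd (lt_of_lt_of_le hs.2 this) (lt_irrefl _)
    · by_contra h
      push_neg at h
      have := hanti.antitoneOn (hmem b (lt_trans hc hcb)) (hφpos s hs) h
      rw [hGφ s hs] at this
      exact absurd (lt_of_le_of_lt this hs.1) (lt_irrefl _)
  have h0U : (0:ℝ) ∈ U := hUsub ⟨le_rfl, hτ.le⟩
  have hτU : τ ∈ U := hUsub ⟨hτ.le, le_rfl⟩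
  have hφ0 : φ 0 = c := by
    apply hanti.injOn (hφpos 0 h0U) (hmem c hc)
    rw [hGφ 0 h0U, hGc]
  have hφτ : φ τ = m := by
    apply hanti.injOn (hφpos τ hτU) (hmem m hm0)
    rw [hGφ τ hτU, hGm]
  have hrange : ∀ s ∈ Icc (0:ℝ) τ, φ s ∈ Icc m c := by
    intro s hs
    have hsU := hUsub hs
    constructor
    · by_contra h
      push_neg at h
      have := hanti (hφpos s hsU) (hmem m hm0) h
      rw [hGφ s hsU, hGm] at this
      exact absurd (lt_of_le_of_lt hs.2 this) (lt_irrefl _)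
    · by_contra h
      push_neg at h
      have := hanti (hmem c hc) (hφpos s hsU) h
      rw [hGφ s hsU, hGc] at this
      exact absurd (lt_of_lt_of_le this hs.1) (lt_irrefl _)
  have hmono : MonotoneOn (fun s => -φ s) U := by
    intro s hs s' hs' hss
    simp only [neg_le_neg_iff]
    by_contra h
    push_neg at h
    have := hanti (hφpos s hs) (hφpos s' hs') h
    rw [hGφ s hs, hGφ s' hs'] at this
    linarith
  have hkey : ∀ x ∈ Ioo a b, G x ∈ U ∧ φ (G x) = x := by
    intro x hx
    have hx0 : x ∈ Ioi (0:ℝ) := hIooIoi hx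
    have h1 : G x ∈ U := ⟨hanti hx0 (hmem b (lt_trans hc hcb)) hx.2,
      hanti (hmem a ha0) hx0 hx.1⟩
    refine ⟨h1, hanti.injOn (hφpos _ h1) hx0 ?_⟩
    rw [hGφ _ h1]
  have hcontφ : ∀ s ∈ U, ContinuousAt φ s := by
    intro s hs
    have himg : (fun s => -φ s) '' U ∈ 𝓝 (-φ s) := by
      apply Filter.mem_of_superset
        (isOpen_Ioo.mem_nhds (show -φ s ∈ Ioo (-b) (-a) by
          have := hφab s hs
          exact ⟨neg_lt_neg this.2, neg_lt_neg this.1⟩))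
      intro y hy
      have hx : -y ∈ Ioo a b := ⟨lt_neg_of_lt_neg hy.2, neg_lt_of_neg_lt hy.1⟩
      obtain ⟨h1, h2⟩ := hkey (-y) hx
      exact ⟨G (-y), h1, by show -φ (G (-y)) = y; rw [h2]; ring⟩
    have h := continuousAt_of_monotoneOn_of_image_mem_nhds hmono (hUopen.mem_nhds hs) himg
    have h2 := h.neg
    exact h2.congr (Filter.Eventually.of_forall fun x => by simp)
  refine ⟨φ, ?_, by rw [hφ0], by rw [hφτ], hrange⟩
  intro s hs
  have hsU := hUsub hs
  have hfne : -(f (φ s)) ≠ 0 := neg_ne_zero.mpr (hfpos _ (hφpos s hsU)).ne'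
  have hd := HasDerivAt.of_local_left_inverse (hcontφ s hsU)
    (hG (φ s) (hφpos s hsU)) hfne
    ((hUopen.eventually_mem hsU).mono fun y hy => hGφ y hy)
  refine hd.congr_deriv ?_
  have hq : (f (φ s))⁻¹ = γ * (1 + η) * (φ s) ^ 2 + 2 * L * (φ s) + γ := by
    rw [hfdef]
    simp [inv_inv]
  rw [inv_neg, hq]
  ring

/-- Lemma 1 of the paper: if `τ` is strictly less than the transit time `T` of the
unperturbed Riccati ODE `φ' = −2Lφ − γ(φ²+1)` from `1/λ` to `λ`, then there exist
`λ* ∈ (λ, 1)` and `η > 0` such that the solution of the perturbed ODE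
`φ' = −2Lφ − γ((1+η)φ² + 1)` with `φ(0) = 1/λ*` satisfies `φ(τ) = λ*` and
`φ(s) ∈ [λ*, 1/λ*]` for all `s ∈ [0, τ]`. -/
theorem stmt_6 (L γ l τ T : ℝ) (hL : 0 ≤ L) (hγ : 0 < γ) (hl : l ∈ Ioo (0 : ℝ) 1)
    (φ₀ : ℝ → ℝ)
    (hode₀ : ∀ s ∈ Icc (0 : ℝ) T, HasDerivAt φ₀ (-2 * L * φ₀ s - γ * ((φ₀ s) ^ 2 + 1)) s)
    (h00 : φ₀ 0 = 1 / l) (hT : 0 < T) (hTl : φ₀ T = l) (hτ : 0 < τ) (hτT : τ < T) :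
    ∃ lstar ∈ Ioo l 1, ∃ η > (0 : ℝ), ∃ φ : ℝ → ℝ,
      (∀ s ∈ Icc (0 : ℝ) τ,
        HasDerivAt φ (-2 * L * φ s - γ * ((1 + η) * (φ s) ^ 2 + 1)) s) ∧
      φ 0 = 1 / lstar ∧ φ τ = lstar ∧
      ∀ s ∈ Icc (0 : ℝ) τ, φ s ∈ Icc lstar (1 / lstar) := by
  obtain ⟨hl0, hl1⟩ := hl
  have hTint : (∫ x in l..(1/l), (γ * (1 + 0) * x ^ 2 + 2 * L * x + γ)⁻¹) = T :=
    transit_eq hγ hL ⟨hl0, hl1⟩ φ₀ hode₀ h00 hT hTl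
  have hll : l < 1 / l := by rw [lt_div_iff₀ hl0]; nlinarith
  -- continuity in the lower endpoint
  set g : ℝ → ℝ := fun t => (γ * (max t (l/2)) ^ 2 + 2 * L * (max t (l/2)) + γ)⁻¹ with hgdef
  have hgden : ∀ t : ℝ, 0 < γ * (max t (l/2)) ^ 2 + 2 * L * (max t (l/2)) + γ := by
    intro t
    have h1 : 0 < max t (l/2) := lt_of_lt_of_le (by positivity) (le_max_right _ _)
    have h2 : 0 ≤ γ * (max t (l/2)) ^ 2 := by positivity
    have h3 : 0 ≤ 2 * L * (max t (l/2)) := by positivity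
    linarith
  have hgcont : Continuous g := by
    apply Continuous.inv₀ (by fun_prop) (fun t => (hgden t).ne')
  have hgint : ∀ a b : ℝ, IntervalIntegrable g MeasureTheory.volume a b := fun a b =>
    hgcont.intervalIntegrable a b
  set A : ℝ → ℝ := fun u => ∫ t in (0:ℝ)..u, g t with hAdef
  have hAcont : Continuous A := intervalIntegral.continuous_primitive hgint 0
  set M : ℝ → ℝ := fun m => A (1/m) - A m with hMdef
  have hMcont : ContinuousAt M l := by
    apply ContinuousAt.sub
    · exact (hAcont.continuousAt).comp (continuousAt_const.div continuousAt_id hl0.ne')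
    · exact hAcont.continuousAt
  have hMeq : ∀ m : ℝ, l ≤ m → m < 1 → M m = ∫ x in m..(1/m), (γ * (1 + 0) * x ^ 2 + 2 * L * x + γ)⁻¹ := by
    intro m hlm hm1
    have hm0 : 0 < m := lt_of_lt_of_le hl0 hlm
    have hmm : m < 1/m := by rw [lt_div_iff₀ hm0]; nlinarith
    have hsplit : A (1/m) - A m = ∫ t in m..(1/m), g t :=
      intervalIntegral.integral_interval_sub_left (hgint 0 (1/m)) (hgint 0 m)
    rw [hMdef]
    simp only
    rw [hsplit]
    apply intervalIntegral.integral_congr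
    intro t ht
    rw [uIcc_of_le hmm.le] at ht
    have hmax : max t (l/2) = t := max_eq_left (by linarith [ht.1])
    simp only [hgdef, hmax]
    norm_num
  have hMl : M l = T := by rw [hMeq l le_rfl hl1]; exact hTint
  -- pick lstar = m with l < m < 1 and τ < M m
  have hev : ∀ᶠ x in nhdsWithin l (Ioi l), τ < M x := by
    apply Filter.Eventually.filter_mono nhdsWithin_le_nhds
    have : τ < M l := by rw [hMl]; exact hτT
    exact hMcont.eventually_const_lt this
  have hev2 : ∀ᶠ x in nhdsWithin l (Ioi l), x ∈ Ioo l 1 :=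
    Filter.eventually_of_mem (Ioo_mem_nhdsGT_of_mem ⟨le_rfl, hl1⟩) (fun x hx => hx)
  obtain ⟨m, hMm, hmIoo⟩ := (hev.and hev2).exists
  obtain ⟨hlm, hm1⟩ := hmIoo
  have hm0 : 0 < m := lt_trans hl0 hlm
  have hmm : m < 1/m := by rw [lt_div_iff₀ hm0]; nlinarith
  set D : ℝ := 1/m - m with hDdef
  have hD : 0 < D := by simp only [hDdef]; linarith
  -- parametric continuity in η
  set F : ℝ → ℝ → ℝ :=
    fun η t => (γ * (1 + |η|) * (max t m) ^ 2 + 2 * L * (max t m) + γ)⁻¹ with hFdef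
  have hFden : ∀ η t : ℝ, 0 < γ * (1 + |η|) * (max t m) ^ 2 + 2 * L * (max t m) + γ := by
    intro η t
    have h1 : 0 < max t m := lt_of_lt_of_le hm0 (le_max_right _ _)
    have h2 : 0 ≤ γ * (1 + |η|) * (max t m) ^ 2 := by positivity
    have h3 : 0 ≤ 2 * L * (max t m) := by positivity
    linarith
  have hFcont : Continuous (Function.uncurry F) := by
    have huneq : Function.uncurry F =
        fun p : ℝ × ℝ => (γ * (1 + |p.1|) * (max p.2 m) ^ 2 + 2 * L * (max p.2 m) + γ)⁻¹ := rfl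
    rw [huneq]
    exact Continuous.inv₀
      (by fun_prop) (fun p => (hFden p.1 p.2).ne')
  set h : ℝ → ℝ := fun η => ∫ t in m..(1/m), F η t with hhdef
  have hhcont : Continuous h :=
    intervalIntegral.continuous_parametric_intervalIntegral_of_continuous' hFcont m (1/m)
  have hheq : ∀ η : ℝ, 0 ≤ η →
      h η = ∫ x in m..(1/m), (γ * (1 + η) * x ^ 2 + 2 * L * x + γ)⁻¹ := by
    intro η hη
    apply intervalIntegral.integral_congr
    intro t ht
    rw [uIcc_of_le hmm.le] at ht
    have hmax : max t m = t := max_eq_left ht.1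
    simp only [hFdef, hmax, abs_of_nonneg hη]
  have hh0 : τ < h 0 := by
    rw [hheq 0 le_rfl, ← hMeq m hlm.le hm1]
    exact hMm
  set η₁ : ℝ := 2 * D / (γ * m ^ 2 * τ) with hη₁def
  have hη₁ : 0 < η₁ := by positivity
  have hhη₁ : h η₁ < τ := by
    rw [hheq η₁ hη₁.le]
    have hC : ∀ x ∈ uIoc m (1/m),
        ‖(γ * (1 + η₁) * x ^ 2 + 2 * L * x + γ)⁻¹‖ ≤ (γ * (1 + η₁) * m ^ 2)⁻¹ := by
      intro x hx
      rw [uIoc_of_le hmm.le] at hx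
      have hxm : m < x := hx.1
      have hq1 : 0 < γ * (1 + η₁) * m ^ 2 := by positivity
      have hx0 : (0:ℝ) < x := lt_trans hm0 hxm
      have hq2 : γ * (1 + η₁) * m ^ 2 ≤ γ * (1 + η₁) * x ^ 2 + 2 * L * x + γ := by
        have hx2 : m ^ 2 ≤ x ^ 2 := by nlinarith
        have hc1 : (0:ℝ) < γ * (1 + η₁) := by positivity
        have hc2 : γ * (1 + η₁) * m ^ 2 ≤ γ * (1 + η₁) * x ^ 2 :=
          mul_le_mul_of_nonneg_left hx2 hc1.le
        have hc3 : 0 ≤ 2 * L * x := by positivity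
        linarith
      have hqpos : 0 < γ * (1 + η₁) * x ^ 2 + 2 * L * x + γ := lt_of_lt_of_le hq1 hq2
      rw [Real.norm_eq_abs, abs_of_pos (inv_pos.mpr hqpos)]
      exact inv_anti₀ hq1 hq2
    have hnorm := intervalIntegral.norm_integral_le_of_norm_le_const hC
    have habs : |1/m - m| = D := by rw [abs_of_pos]; exact hD
    rw [habs] at hnorm
    have hb1 : γ * η₁ * m ^ 2 = 2 * D / τ := by
      rw [hη₁def]; field_simp
    have hb2 : (γ * (1 + η₁) * m ^ 2)⁻¹ ≤ (2 * D / τ)⁻¹ := by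
      rw [← hb1]
      apply inv_anti₀ (by positivity)
      nlinarith [sq_nonneg m]
    have hb3 : (γ * (1 + η₁) * m ^ 2)⁻¹ * D ≤ (2 * D / τ)⁻¹ * D := by
      exact mul_le_mul_of_nonneg_right hb2 hD.le
    have hb4 : (2 * D / τ)⁻¹ * D = τ / 2 := by field_simp
    calc (∫ x in m..(1/m), (γ * (1 + η₁) * x ^ 2 + 2 * L * x + γ)⁻¹)
        ≤ ‖∫ x in m..(1/m), (γ * (1 + η₁) * x ^ 2 + 2 * L * x + γ)⁻¹‖ := le_norm_self _
      _ ≤ (γ * (1 + η₁) * m ^ 2)⁻¹ * D := hnorm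
      _ ≤ τ / 2 := by linarith [hb3, hb4 ▸ hb3]
      _ < τ := by linarith
  -- intermediate value in η
  have hIVT := intermediate_value_Icc' hη₁.le hhcont.continuousOn
  have hτmem : τ ∈ Icc (h η₁) (h 0) := ⟨hhη₁.le, hh0.le⟩
  obtain ⟨η, hηmem, hηeq⟩ := hIVT hτmem
  have hηpos : 0 < η := by
    rcases lt_or_eq_of_le hηmem.1 with h' | h'
    · exact h'
    · exfalso; rw [← h'] at hηeq; rw [hηeq] at hh0; exact lt_irrefl _ hh0
  have hFη : (∫ x in m..(1/m), (γ * (1 + η) * x ^ 2 + 2 * L * x + γ)⁻¹) = τ := by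
    rw [← hheq η hηpos.le]; exact hηeq
  obtain ⟨φ, hφode, hφ0, hφτ, hφrange⟩ :=
    riccati_solution hγ hL hm0 hm1 hηpos hτ hFη
  exact ⟨m, ⟨hlm, hm1⟩, η, hηpos, φ, hφode, hφ0, hφτ, hφrange⟩
end

section
/- Let U : [t₀, t₁] → ℝ≥0 be absolutely continuous, μ₁ > 0, Γ ≥ 0, and suppose U'(t) ≤ −μ₁ U(t) for almost every t with U(t) ≥ Γ. Then for all t ∈ [t₀, t₁], U(t) ≤ max{ U(t₀) e^{−μ₁ (t − t₀)}, Γ }. -/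
open Set Real

/-- Decay lemma on a subinterval where `U ≥ Γ` in the interior. -/
lemma decay_aux (t₀ t₁ μ₁ Γ : ℝ) (hμ : 0 < μ₁)
    (U U' : ℝ → ℝ)
    (hderiv : ∀ t ∈ Icc t₀ t₁, HasDerivAt U (U' t) t)
    (hdec : ∀ t ∈ Icc t₀ t₁, Γ ≤ U t → U' t ≤ -μ₁ * U t)
    (a b : ℝ) (hab : a ≤ b) (ha : t₀ ≤ a) (hb : b ≤ t₁)
    (hge : ∀ s ∈ Ioo a b, Γ ≤ U s) :
    U b ≤ U a * Real.exp (-μ₁ * (b - a)) := by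
  set g : ℝ → ℝ := fun t => U t * Real.exp (μ₁ * t) with hg
  have hsub : Icc a b ⊆ Icc t₀ t₁ := Icc_subset_Icc ha hb
  have hgd : ∀ t ∈ Icc t₀ t₁,
      HasDerivAt g (U' t * Real.exp (μ₁ * t) + U t * (μ₁ * Real.exp (μ₁ * t))) t := by
    intro t ht
    have he : HasDerivAt (fun t => Real.exp (μ₁ * t)) (μ₁ * Real.exp (μ₁ * t)) t := by
      have := ((hasDerivAt_id t).const_mul μ₁).exp
      simpa [mul_comm] using this
    exact (hderiv t ht).mul he
  have hanti : AntitoneOn g (Icc a b) := by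
    apply antitoneOn_of_deriv_nonpos (convex_Icc a b)
    · exact fun t ht => ((hgd t (hsub ht)).continuousAt).continuousWithinAt
    · intro t ht
      rw [interior_Icc] at ht
      exact (hgd t (hsub (Ioo_subset_Icc_self ht))).differentiableAt.differentiableWithinAt
    · intro t ht
      rw [interior_Icc] at ht
      rw [(hgd t (hsub (Ioo_subset_Icc_self ht))).deriv]
      have h1 : U' t ≤ -μ₁ * U t :=
        hdec t (hsub (Ioo_subset_Icc_self ht)) (hge t ht)
      have h2 : (0:ℝ) < Real.exp (μ₁ * t) := Real.exp_pos _
      nlinarith [Real.exp_pos (μ₁ * t)]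
  have h := hanti (left_mem_Icc.2 hab) (right_mem_Icc.2 hab) hab
  have hb' : g b ≤ g a := h
  have hepos : (0:ℝ) < Real.exp (μ₁ * b) := Real.exp_pos _
  have : U b ≤ U a * Real.exp (μ₁ * a) / Real.exp (μ₁ * b) := by
    rw [le_div_iff₀ hepos]
    simpa [hg] using hb'
  calc U b ≤ U a * Real.exp (μ₁ * a) / Real.exp (μ₁ * b) := this
    _ = U a * Real.exp (-μ₁ * (b - a)) := by
        rw [mul_div_assoc, ← Real.exp_sub]; ring_nf

/-- Comparison principle: a nonnegative differentiable function whose derivative is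
dominated by `−μ₁ U` whenever `U ≥ Γ` satisfies
`U(t) ≤ max { U(t₀) e^{−μ₁(t−t₀)}, Γ }` on `[t₀, t₁]`. -/
theorem stmt_10 (t₀ t₁ μ₁ Γ : ℝ) (hμ : 0 < μ₁) (hΓ : 0 ≤ Γ)
    (U U' : ℝ → ℝ) (hnn : ∀ t ∈ Icc t₀ t₁, 0 ≤ U t)
    (hderiv : ∀ t ∈ Icc t₀ t₁, HasDerivAt U (U' t) t)
    (hdec : ∀ t ∈ Icc t₀ t₁, Γ ≤ U t → U' t ≤ -μ₁ * U t) :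
    ∀ t ∈ Icc t₀ t₁, U t ≤ max (U t₀ * Real.exp (-μ₁ * (t - t₀))) Γ := by
  intro t ht
  by_contra hcon
  push_neg at hcon
  rw [max_lt_iff] at hcon
  obtain ⟨h1, h2⟩ := hcon
  have ht₀ : t₀ ≤ t := ht.1
  set A : Set ℝ := Icc t₀ t ∩ U ⁻¹' (Iic Γ) with hA
  have hIccsub : Icc t₀ t ⊆ Icc t₀ t₁ := Icc_subset_Icc le_rfl ht.2
  by_cases hne : A.Nonempty
  · -- τ = sSup A
    have hcont : ContinuousOn U (Icc t₀ t) :=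
      fun s hs => ((hderiv s (hIccsub hs)).continuousAt).continuousWithinAt
    have hclosed : IsClosed A :=
      hcont.preimage_isClosed_of_isClosed isClosed_Icc isClosed_Iic
    have hbdd : BddAbove A := BddAbove.mono inter_subset_left bddAbove_Icc
    obtain ⟨hτmem, hτle⟩ : sSup A ∈ A := hclosed.csSup_mem hne hbdd
    set τ := sSup A with hτ
    have hτt : τ < t := lt_of_le_of_ne hτmem.2 (by
      intro h; rw [h] at hτle; exact absurd hτle (not_le.2 h2))
    have hge : ∀ s ∈ Ioo τ t, Γ ≤ U s := by
      intro s hs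
      by_contra hls
      have : s ∈ A := ⟨⟨le_trans hτmem.1 hs.1.le, hs.2.le⟩, le_of_not_ge hls⟩
      exact absurd (le_csSup hbdd this) (not_le.2 hs.1)
    have hd := decay_aux t₀ t₁ μ₁ Γ hμ U U' hderiv hdec τ t hτt.le hτmem.1 ht.2 hge
    have he1 : Real.exp (-μ₁ * (t - τ)) ≤ 1 :=
      Real.exp_le_one_iff.2 (by nlinarith)
    have hUτ : 0 ≤ U τ := hnn τ (hIccsub hτmem)
    have hτle' : U τ ≤ Γ := hτle
    nlinarith
  · -- A empty: U > Γ on all of [t₀, t]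
    have hge : ∀ s ∈ Ioo t₀ t, Γ ≤ U s := by
      intro s hs
      by_contra hls
      exact hne ⟨s, ⟨Ioo_subset_Icc_self hs, le_of_not_ge hls⟩⟩
    have := decay_aux t₀ t₁ μ₁ Γ hμ U U' hderiv hdec t₀ t ht₀ le_rfl ht.2 hge
    linarith
end
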